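/- For every integer n ≥ 3, the cycle C_n of order n satisfies γ_oir2(C_n) = n/2 if and only if n ≡ 0 (mod 4). -/

import Mathlib

/-- `f` is an outer-independent 2-rainbow dominating function of `G`. -/
def IsOI2RD {V : Type*} (G : SimpleGraph V) (f : V → Finset (Fin 2)) : Prop :=
  (∀ v, f v = ∅ → ∀ c : Fin 2, ∃ u, G.Adj v u ∧ c ∈ f u) ∧
  (∀ u w, f u = ∅ → f w = ∅ → ¬ G.Adj u w)

/-- The outer-independent 2-rainbow domination number of `G`. -/
noncomputable def oir2 {V : Type*} [Fintype V] (G : SimpleGraph V) : ℕ :=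
  sInf {w | ∃ f : V → Finset (Fin 2), IsOI2RD G f ∧ w = ∑ v, (f v).card}


lemma val_one_eq (n : ℕ) [NeZero n] (hn : 3 ≤ n) : ((1 : Fin n) : ℕ) = 1 := by
  rw [Fin.val_one']; exact Nat.mod_eq_of_lt (by omega)

lemma adj_succ (n : ℕ) [NeZero n] (hn : 3 ≤ n) (v : Fin n) :
    (SimpleGraph.cycleGraph n).Adj v (v+1) := by
  rw [SimpleGraph.cycleGraph_adj']
  right
  simp only [add_sub_cancel_left]
  exact val_one_eq n hn

lemma adj_pred (n : ℕ) [NeZero n] (hn : 3 ≤ n) (v : Fin n) :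
    (SimpleGraph.cycleGraph n).Adj v (v-1) := by
  rw [SimpleGraph.cycleGraph_adj']
  left
  simp only [sub_sub_cancel]
  exact val_one_eq n hn

open scoped Fin.CommRing in
lemma adj_mem (n : ℕ) [NeZero n] (hn : 3 ≤ n) (v u : Fin n)
    (h : (SimpleGraph.cycleGraph n).Adj v u) : u = v - 1 ∨ u = v + 1 := by
  rw [SimpleGraph.cycleGraph_adj'] at h
  rcases h with h | h
  · left
    have hv : v - u = 1 := by apply Fin.ext; rw [val_one_eq n hn]; exact h
    linear_combination -hv
  · right
    have hv : u - v = 1 := by apply Fin.ext; rw [val_one_eq n hn]; exact h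
    linear_combination hv

open Finset in
lemma card_empty_set_le (n : ℕ) [NeZero n] (hn : 3 ≤ n) (f : Fin n → Finset (Fin 2))
    (hf : ∀ u w, f u = ∅ → f w = ∅ → ¬ (SimpleGraph.cycleGraph n).Adj u w) :
    2 * (Finset.univ.filter (fun v => f v = ∅)).card ≤ n := by
  set S := Finset.univ.filter (fun v => f v = ∅) with hS
  have hdisj : Disjoint S (S.image (· + 1)) := by
    rw [Finset.disjoint_left]
    intro v hv hv'
    obtain ⟨u, hu, huv⟩ := Finset.mem_image.mp hv'
    have h1 : f v = ∅ := (Finset.mem_filter.mp hv).2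
    have h2 : f u = ∅ := (Finset.mem_filter.mp hu).2
    exact hf u v h2 h1 (huv ▸ adj_succ n hn u)
  have hcard : (S.image (· + 1)).card = S.card :=
    Finset.card_image_of_injective S (fun a b h => by simpa using h)
  have := Finset.card_union_of_disjoint hdisj
  have hle : (S ∪ S.image (· + 1)).card ≤ n := by
    have h := Finset.card_le_card (Finset.subset_univ (S ∪ S.image (· + 1)))
    simpa using h
  omega

open Finset in
lemma weight_lower (n : ℕ) [NeZero n] (hn : 3 ≤ n) (f : Fin n → Finset (Fin 2))
    (hf : IsOI2RD (SimpleGraph.cycleGraph n) f) :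
    n ≤ 2 * ∑ v, (f v).card := by
  classical
  set S := Finset.univ.filter (fun v => f v = ∅) with hS
  have h1 : 2 * S.card ≤ n := card_empty_set_le n hn f hf.2
  have h2 : Sᶜ.card ≤ ∑ v, (f v).card := by
    calc Sᶜ.card = ∑ v ∈ Sᶜ, 1 := by simp
    _ ≤ ∑ v ∈ Sᶜ, (f v).card := by
        apply Finset.sum_le_sum
        intro v hv
        have : f v ≠ ∅ := by
          simpa [hS] using Finset.mem_compl.mp hv
        exact Nat.one_le_iff_ne_zero.mpr (by simpa [Finset.card_eq_zero] using this)
    _ ≤ ∑ v, (f v).card := Finset.sum_le_sum_of_subset (Finset.subset_univ _)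
  have h3 : Sᶜ.card = n - S.card := by
    rw [Finset.card_compl]; simp
  omega

lemma succ_val_mod (n : ℕ) [NeZero n] (hn : 3 ≤ n) (h4 : 4 ∣ n) (v : Fin n) :
    ((v + 1 : Fin n) : ℕ) % 4 = (v.val + 1) % 4 := by
  have : ((v + 1 : Fin n) : ℕ) = (v.val + 1) % n := by
    rw [Fin.add_def, val_one_eq n hn]
  rw [this, Nat.mod_mod_of_dvd _ h4]

lemma pred_val_mod (n : ℕ) [NeZero n] (hn : 3 ≤ n) (h4 : 4 ∣ n) (v : Fin n) :
    ((v - 1 : Fin n) : ℕ) % 4 = (v.val + 3) % 4 := by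
  have : ((v - 1 : Fin n) : ℕ) = (n - 1 + v.val) % n := by
    rw [Fin.sub_def, val_one_eq n hn]
  rw [this, Nat.mod_mod_of_dvd _ h4]
  omega

noncomputable def f0 (n : ℕ) : Fin n → Finset (Fin 2) :=
  fun v => if v.val % 4 = 1 then {0} else if v.val % 4 = 3 then {1} else ∅

lemma f0_isOI2RD (n : ℕ) [NeZero n] (hn : 3 ≤ n) (h4 : 4 ∣ n) :
    IsOI2RD (SimpleGraph.cycleGraph n) (f0 n) := by
  constructor
  · intro v hv c
    have hv4 : v.val % 4 = 0 ∨ v.val % 4 = 2 := by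
      by_contra h
      push_neg at h
      unfold f0 at hv
      split_ifs at hv with h1 h2
      · simp at hv
      · simp at hv
      · omega
    have hs := succ_val_mod n hn h4 v
    have hp := pred_val_mod n hn h4 v
    fin_cases c
    · -- need u with 0 ∈ f0 n u, i.e. u.val % 4 = 1
      rcases hv4 with h0 | h2
      · refine ⟨v + 1, adj_succ n hn v, ?_⟩
        have : ((v+1 : Fin n) : ℕ) % 4 = 1 := by omega
        simp [f0, this]
      · refine ⟨v - 1, adj_pred n hn v, ?_⟩
        have : ((v-1 : Fin n) : ℕ) % 4 = 1 := by omega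
        simp [f0, this]
    · rcases hv4 with h0 | h2
      · refine ⟨v - 1, adj_pred n hn v, ?_⟩
        have : ((v-1 : Fin n) : ℕ) % 4 = 3 := by omega
        simp [f0, this]
      · refine ⟨v + 1, adj_succ n hn v, ?_⟩
        have : ((v+1 : Fin n) : ℕ) % 4 = 3 := by omega
        simp [f0, this]
  · intro u w hu hw hadj
    have heven : ∀ x : Fin n, f0 n x = ∅ → x.val % 2 = 0 := by
      intro x hx
      unfold f0 at hx
      split_ifs at hx with h1 h2
      · simp at hx
      · simp at hx
      · omega
    have hu2 := heven u hu
    have hw2 := heven w hw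
    rcases adj_mem n hn u w hadj with h | h
    · have := pred_val_mod n hn h4 u
      rw [h] at hw2
      omega
    · have := succ_val_mod n hn h4 u
      rw [h] at hw2
      omega

lemma sum_indicator_odd (m : ℕ) :
    (∑ i ∈ Finset.range m, if i % 2 = 1 then 1 else 0) = m / 2 := by
  induction m with
  | zero => simp
  | succ m ih =>
    rw [Finset.sum_range_succ, ih]
    split_ifs with h <;> omega

lemma f0_weight (n : ℕ) [NeZero n] (h2 : 2 ∣ n) :
    ∑ v, ((f0 n v).card) = n / 2 := by
  have : ∀ v : Fin n, (f0 n v).card = if v.val % 2 = 1 then 1 else 0 := by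
    intro v
    unfold f0
    have h : v.val % 4 = 0 ∨ v.val % 4 = 1 ∨ v.val % 4 = 2 ∨ v.val % 4 = 3 := by omega
    have hp : v.val % 2 = v.val % 4 % 2 := (Nat.mod_mod_of_dvd _ (by norm_num)).symm
    rcases h with h|h|h|h <;> rw [hp, h] <;> simp
  rw [Finset.sum_congr rfl (fun v _ => this v), Fin.sum_univ_eq_sum_range (fun i => if i % 2 = 1 then 1 else 0)]
  exact sum_indicator_odd n

open scoped Fin.CommRing in
open Finset in
lemma forward_key (n : ℕ) [NeZero n] (hn : 3 ≤ n) (f : Fin n → Finset (Fin 2))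
    (hf : IsOI2RD (SimpleGraph.cycleGraph n) f)
    (hw : 2 * ∑ v, (f v).card = n) : n % 4 = 0 := by
  classical
  set W := ∑ v, (f v).card with hW
  set S := Finset.univ.filter (fun v => f v = ∅) with hS
  have hmemS : ∀ v, v ∈ S ↔ f v = ∅ := by
    intro v; simp [hS]
  -- cardinality facts
  have h1 : 2 * S.card ≤ n := card_empty_set_le n hn f hf.2
  have hscomp : Sᶜ.card = n - S.card := by rw [Finset.card_compl]; simp
  have hsumS : ∑ v ∈ S, (f v).card = 0 := by
    apply Finset.sum_eq_zero
    intro v hv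
    simp [(hmemS v).mp hv]
  have hsplit : ∑ v ∈ Sᶜ, (f v).card = W := by
    have := Finset.sum_add_sum_compl S (fun v => (f v).card)
    omega
  have hone : ∀ v ∈ Sᶜ, 1 ≤ (f v).card := by
    intro v hv
    have : f v ≠ ∅ := by simpa [hmemS] using Finset.mem_compl.mp hv
    exact Nat.one_le_iff_ne_zero.mpr (by simpa [Finset.card_eq_zero] using this)
  have h2 : Sᶜ.card ≤ W := by
    rw [← hsplit]
    calc Sᶜ.card = ∑ v ∈ Sᶜ, 1 := by simp
    _ ≤ _ := Finset.sum_le_sum hone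
  -- equality: S.card = W, and 2*S.card = n
  have hScard : 2 * S.card = n := by omega
  have hcompW : Sᶜ.card = W := by omega
  -- each nonempty vertex has card exactly 1
  have hcard1 : ∀ v, v ∉ S → (f v).card = 1 := by
    intro v hv
    have heq : ∑ v ∈ Sᶜ, (f v).card = ∑ v ∈ Sᶜ, 1 := by
      rw [hsplit]; simp [hcompW]
    have := (Finset.sum_eq_sum_iff_of_le hone).mp heq.symm
    exact (this v (Finset.mem_compl.mpr hv)).symm
  -- union covers
  have huniv : S ∪ S.image (· + 1) = Finset.univ := by
    apply Finset.eq_univ_of_card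
    rw [Finset.card_union_of_disjoint, Finset.card_image_of_injective S
      (fun a b h => by simpa using h)]
    · simp; omega
    · rw [Finset.disjoint_left]
      intro v hv hv'
      obtain ⟨u, hu, huv⟩ := Finset.mem_image.mp hv'
      exact hf.2 u v ((hmemS u).mp hu) ((hmemS v).mp hv) (huv ▸ adj_succ n hn u)
  have hcover : ∀ v : Fin n, v ∈ S ∨ v - 1 ∈ S := by
    intro v
    have : v ∈ S ∪ S.image (· + 1) := huniv ▸ Finset.mem_univ v
    rcases Finset.mem_union.mp this with h | h
    · exact Or.inl h
    · obtain ⟨u, hu, huv⟩ := Finset.mem_image.mp h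
      right
      have : u = v - 1 := by linear_combination huv
      exact this ▸ hu
  -- basic step facts
  have hstep1 : ∀ v : Fin n, v ∈ S → v + 1 ∉ S := by
    intro v hv hv1
    exact hf.2 v (v+1) ((hmemS v).mp hv) ((hmemS _).mp hv1) (adj_succ n hn v)
  have hstep2 : ∀ v : Fin n, v ∈ S → v + 2 ∈ S := by
    intro v hv
    rcases hcover (v + 2) with h | h
    · exact h
    · exfalso
      have : v + 2 - 1 = v + 1 := by ring
      exact hstep1 v hv (this ▸ h)
  -- distinct neighbors
  have hdist : ∀ v : Fin n, v ∈ S → f (v - 1) ≠ f (v + 1) := by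
    intro v hv heq
    obtain ⟨u0, hu0a, hu0⟩ := hf.1 v ((hmemS v).mp hv) 0
    obtain ⟨u1, hu1a, hu1⟩ := hf.1 v ((hmemS v).mp hv) 1
    have h0 : (0 : Fin 2) ∈ f (v + 1) := by
      rcases adj_mem n hn v u0 hu0a with h | h <;> rw [h] at hu0
      · rwa [heq] at hu0
      · exact hu0
    have h1 : (1 : Fin 2) ∈ f (v + 1) := by
      rcases adj_mem n hn v u1 hu1a with h | h <;> rw [h] at hu1
      · rwa [heq] at hu1
      · exact hu1
    have hc : (f (v+1)).card = 1 := hcard1 _ (hstep1 v hv)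
    obtain ⟨x, hx⟩ := Finset.card_eq_one.mp hc
    rw [hx] at h0 h1
    simp only [Finset.mem_singleton] at h0 h1
    exact absurd (h0.trans h1.symm) (by decide)
  -- pick starting vertex
  have hSne : S.Nonempty := by
    rw [← Finset.card_pos]
    omega
  obtain ⟨v0, hv0⟩ := hSne
  have hv0s : (f (v0 + 1)).card = 1 := hcard1 _ (hstep1 v0 hv0)
  obtain ⟨b, hb⟩ := Finset.card_eq_one.mp hv0s
  -- Fin 2 fact
  have fin2 : ∀ c d : Fin 2, c ≠ d → c = d + 1 := by decide
  -- main induction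
  have claim : ∀ k : ℕ, (v0 + ((2*k : ℕ) : Fin n)) ∈ S ∧
      f (v0 + ((2*k : ℕ) : Fin n) + 1) = {b + (k : Fin 2)} := by
    intro k
    induction k with
    | zero => simpa using ⟨hv0, hb⟩
    | succ k ih =>
      obtain ⟨ih1, ih2⟩ := ih
      have hcast : ((2*(k+1) : ℕ) : Fin n) = ((2*k : ℕ) : Fin n) + 2 := by push_cast; ring
      have hcast2 : ((k+1 : ℕ) : Fin 2) = ((k : ℕ) : Fin 2) + 1 := by push_cast; ring
      set w := v0 + ((2*k : ℕ) : Fin n) + 2 with hw'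
      have hwS : w ∈ S := by
        have := hstep2 _ ih1
        exact this
      have hweq : v0 + ((2*(k+1) : ℕ) : Fin n) = w := by rw [hcast, hw']; ring
      refine ⟨hweq ▸ hwS, ?_⟩
      have hwp : w - 1 = v0 + ((2*k : ℕ) : Fin n) + 1 := by rw [hw']; ring
      have hc1 : (f (w + 1)).card = 1 := hcard1 _ (hstep1 w hwS)
      obtain ⟨c, hc⟩ := Finset.card_eq_one.mp hc1
      have hne : f (w - 1) ≠ f (w + 1) := hdist w hwS
      rw [hwp, ih2, hc] at hne
      have : c ≠ b + (k : Fin 2) := fun h => hne (by rw [h])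
      have hcval : c = b + (k : Fin 2) + 1 := fin2 _ _ this
      rw [hweq, hc, hcval, hcast2, add_assoc]
  -- close the cycle
  have hfin := (claim (n/2)).2
  have hn2 : 2 * (n/2) = n := by omega
  have : ((2 * (n/2) : ℕ) : Fin n) = 0 := by rw [hn2]; simp
  rw [this, add_zero, hb] at hfin
  have hbb : b = b + ((n/2 : ℕ) : Fin 2) := Finset.singleton_injective hfin
  have : ((n/2 : ℕ) : Fin 2) = 0 := by
    have := hbb.symm
    calc ((n/2 : ℕ) : Fin 2) = b + ((n/2 : ℕ) : Fin 2) - b := by ring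
    _ = 0 := by rw [← hbb]; ring
  have h2d : 2 ∣ n / 2 := Fin.natCast_eq_zero.mp this
  omega

/-- For `n ≥ 3`, the cycle `C_n` satisfies `γ_oir2(C_n) = n/2` iff `n ≡ 0 (mod 4)`. -/
theorem oir2_cycle_eq_half_iff (n : ℕ) (hn : 3 ≤ n) :
    (oir2 (SimpleGraph.cycleGraph n) : ℝ) = (n : ℝ) / 2 ↔ n % 4 = 0 := by
  haveI : NeZero n := ⟨by omega⟩
  set A : Set ℕ :=
    {w | ∃ f : Fin n → Finset (Fin 2), IsOI2RD (SimpleGraph.cycleGraph n) f ∧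
      w = ∑ v, (f v).card} with hA
  have hoA : oir2 (SimpleGraph.cycleGraph n) = sInf A := rfl
  have hAne : A.Nonempty := by
    refine ⟨∑ v : Fin n, ((fun _ : Fin n => (Finset.univ : Finset (Fin 2))) v).card,
      fun _ => Finset.univ, ⟨?_, ?_⟩, rfl⟩
    · intro v hv
      simp [Finset.eq_empty_iff_forall_notMem] at hv
    · intro u w hu hw
      simp [Finset.eq_empty_iff_forall_notMem] at hu
  constructor
  · intro h
    have h2 : (2 : ℝ) * (oir2 (SimpleGraph.cycleGraph n) : ℝ) = (n : ℝ) := by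
      rw [h]; ring
    have h2' : 2 * oir2 (SimpleGraph.cycleGraph n) = n := by exact_mod_cast h2
    have hmem : sInf A ∈ A := Nat.sInf_mem hAne
    obtain ⟨f, hf, hsum⟩ := hmem
    apply forward_key n hn f hf
    rw [← hsum, ← hoA]
    exact h2'
  · intro h4
    have hd4 : 4 ∣ n := Nat.dvd_of_mod_eq_zero h4
    have h2d : 2 ∣ n := dvd_trans ⟨2, rfl⟩ hd4
    have hmem : n / 2 ∈ A := ⟨f0 n, f0_isOI2RD n hn hd4, (f0_weight n h2d).symm⟩
    have hup : sInf A ≤ n / 2 := Nat.sInf_le hmem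
    have hlow : n / 2 ≤ sInf A := by
      apply le_csInf ⟨_, hmem⟩
      rintro w ⟨f, hf, rfl⟩
      have := weight_lower n hn f hf
      omega
    have heq : oir2 (SimpleGraph.cycleGraph n) = n / 2 := by
      rw [hoA]; omega
    rw [heq, eq_div_iff (two_ne_zero)]
    exact_mod_cast (by omega : (n / 2) * 2 = n)
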